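/- arXiv:1501.01209 — 6 statements merged into one kernel-verified Lean document; each statement's English description precedes it below -/
import Mathlib

section
/- Suppose the scalars u_t ∈ ℝ and λ_t > 0 (t = 1,…,T) satisfy the Afriat inequalities u_τ − u_t − λ_t p_t·(x_τ − x_t) ≤ 0 for all t, τ ∈ {1,…,T}. Then the function u(x) = min_{t ∈ {1,…,T}} { u_t + λ_t p_t·(x − x_t) } satisfies u(x_t) = u_t for every t, and u rationalizes the dataset: for every t and every x ∈ ℝ^m with p_t·x ≤ p_t·x_t one has u(x) ≤ u(x_t), i.e., x_t maximizes u over the budget set {x : p_t·x ≤ p_t·x_t}. -/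
/-- The Afriat utility: the lower envelope of the hyperplanes
`y ↦ u t + λ t * p t ⬝ (y - x t)`. -/
noncomputable def afriatUtility {m T : ℕ}
    (hT : (Finset.univ : Finset (Fin T)).Nonempty)
    (p x : Fin T → Fin m → ℝ) (u lam : Fin T → ℝ) (y : Fin m → ℝ) : ℝ :=
  Finset.univ.inf' hT fun t => u t + lam t * ∑ i, p t i * (y i - x t i)

/-- If the Afriat inequalities hold with positive multipliers, the constructed
utility interpolates the data (`u (x t) = u t`) and rationalizes the dataset:
`x t` maximizes `u` over the budget set `{y : p t ⬝ y ≤ p t ⬝ x t}`. -/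
theorem afriat_utility_rationalizes {m T : ℕ} (hT : 0 < T)
    (p x : Fin T → Fin m → ℝ) (u lam : Fin T → ℝ)
    (hp : ∀ t i, 0 < p t i)
    (hlam : ∀ t, 0 < lam t)
    (hAfriat : ∀ t τ : Fin T,
      u τ - u t - lam t * ∑ i, p t i * (x τ i - x t i) ≤ 0) :
    (∀ t : Fin T,
      afriatUtility (Finset.univ_nonempty_iff.mpr ⟨⟨0, hT⟩⟩) p x u lam (x t) = u t) ∧
    (∀ t : Fin T, ∀ y : Fin m → ℝ,
      (∑ i, p t i * y i) ≤ (∑ i, p t i * x t i) →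
      afriatUtility (Finset.univ_nonempty_iff.mpr ⟨⟨0, hT⟩⟩) p x u lam y ≤
        afriatUtility (Finset.univ_nonempty_iff.mpr ⟨⟨0, hT⟩⟩) p x u lam (x t)) := by
  have hne : (Finset.univ : Finset (Fin T)).Nonempty :=
    Finset.univ_nonempty_iff.mpr ⟨⟨0, hT⟩⟩
  have hinterp : ∀ t : Fin T, afriatUtility hne p x u lam (x t) = u t := by
    intro t
    apply le_antisymm
    · calc afriatUtility hne p x u lam (x t)
          ≤ u t + lam t * ∑ i, p t i * (x t i - x t i) :=
            Finset.inf'_le _ (Finset.mem_univ t)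
        _ = u t := by simp
    · apply Finset.le_inf'
      intro s _
      have := hAfriat s t
      linarith
  refine ⟨hinterp, ?_⟩
  intro t y hy
  rw [hinterp t]
  calc afriatUtility hne p x u lam y
      ≤ u t + lam t * ∑ i, p t i * (y i - x t i) :=
        Finset.inf'_le _ (Finset.mem_univ t)
    _ ≤ u t := by
        have hsum : ∑ i, p t i * (y i - x t i) ≤ 0 := by
          have : ∑ i, p t i * (y i - x t i)
              = (∑ i, p t i * y i) - ∑ i, p t i * x t i := by
            rw [← Finset.sum_sub_distrib]; ring_nf
          linarith
        nlinarith [hlam t]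
end

section
/- If u : ℝ^m → ℝ is locally non-satiated and for every t ∈ {1,…,T} the action x_t maximizes u over the budget set {x ∈ ℝ^m : p_t·x ≤ p_t·x_t}, then the dataset D = {(p_t, x_t)} satisfies the Generalized Axiom of Revealed Preference (GARP): for every k ≤ T, if p_t·x_t ≥ p_t·x_{t+1} for all t ≤ k−1, then p_k·x_k ≤ p_k·x_1. -/
/-- Dot product of two vectors in `ℝ^m`. -/
def dotp {m : ℕ} (p x : Fin m → ℝ) : ℝ := ∑ i, p i * x i

/-- The Generalized Axiom of Revealed Preference: for every `k ≤ T`, if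
`p t ⬝ x t ≥ p t ⬝ x (t+1)` for all `t ≤ k - 1`, then `p k ⬝ x k ≤ p k ⬝ x 1`. -/
def GARP {m T : ℕ} (p x : Fin T → Fin m → ℝ) : Prop :=
  ∀ k : Fin T,
    (∀ t : Fin T, (ht : t < k) →
      dotp (p t) (x ⟨t.val + 1, lt_of_le_of_lt (Nat.succ_le_of_lt ht) k.isLt⟩)
        ≤ dotp (p t) (x t)) →
    dotp (p k) (x k) ≤ dotp (p k) (x ⟨0, lt_of_le_of_lt (Nat.zero_le k.val) k.isLt⟩)

lemma dotp_sub {m : ℕ} (p a b : Fin m → ℝ) :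
    dotp p (a - b) = dotp p a - dotp p b := by
  simp [dotp, mul_sub, Finset.sum_sub_distrib]

lemma dotp_le {m : ℕ} (p v : Fin m → ℝ) (hp : ∀ i, 0 < p i) :
    dotp p v ≤ (∑ i, p i) * ‖v‖ := by
  rw [Finset.sum_mul]
  refine Finset.sum_le_sum fun i _ => ?_
  have h1 : v i ≤ ‖v‖ := le_trans (le_abs_self _) (norm_le_pi_norm v i)
  exact mul_le_mul_of_nonneg_left h1 (hp i).le

/-- If `u` is locally non-satiated and each `x t` maximizes `u` over the budget
set `{y : p t ⬝ y ≤ p t ⬝ x t}`, then the dataset satisfies GARP. -/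
theorem utility_maximization_implies_GARP {m T : ℕ}
    (p x : Fin T → Fin m → ℝ)
    (hp : ∀ t i, 0 < p t i)
    (u : (Fin m → ℝ) → ℝ)
    (hns : ∀ (y : Fin m → ℝ) (ε : ℝ), 0 < ε → ∃ y' : Fin m → ℝ, ‖y' - y‖ < ε ∧ u y < u y')
    (hmax : ∀ t : Fin T, ∀ y : Fin m → ℝ,
      dotp (p t) y ≤ dotp (p t) (x t) → u y ≤ u (x t)) :
    GARP p x := by
  intro k h
  set x0 : Fin m → ℝ := x ⟨0, lt_of_le_of_lt (Nat.zero_le k.val) k.isLt⟩ with hx0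
  -- chain: u (x k) ≤ u x0
  have chain : ∀ n (hn : n < T), n ≤ k.val → u (x ⟨n, hn⟩) ≤ u x0 := by
    intro n
    induction n with
    | zero => intro hn _; exact le_of_eq rfl
    | succ n ih =>
      intro hn hnk
      have hn' : n < T := Nat.lt_of_succ_lt hn
      have htk : (⟨n, hn'⟩ : Fin T) < k := Nat.lt_of_succ_le hnk
      have h1 := h ⟨n, hn'⟩ htk
      have h2 : u (x ⟨n + 1, hn⟩) ≤ u (x ⟨n, hn'⟩) := by
        exact hmax ⟨n, hn'⟩ _ h1
      exact le_trans h2 (ih hn' (Nat.le_of_succ_le hnk))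
  have hu : u (x k) ≤ u x0 := by
    have := chain k.val k.isLt le_rfl
    simpa using this
  by_contra hcon
  push_neg at hcon
  set δ : ℝ := dotp (p k) (x k) - dotp (p k) x0 with hδ
  have hδpos : 0 < δ := sub_pos.mpr hcon
  set S : ℝ := ∑ i, p k i with hS
  have hSnn : 0 ≤ S := Finset.sum_nonneg fun i _ => (hp k i).le
  have hS1 : 0 < S + 1 := by linarith
  obtain ⟨y', hy', huy'⟩ := hns x0 (δ / (S + 1)) (div_pos hδpos hS1)
  have hbound : dotp (p k) (y' - x0) ≤ S * ‖y' - x0‖ := dotp_le _ _ (hp k)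
  have h3 : S * ‖y' - x0‖ < δ := by
    calc S * ‖y' - x0‖ ≤ (S + 1) * ‖y' - x0‖ := by nlinarith [norm_nonneg (y' - x0)]
    _ < (S + 1) * (δ / (S + 1)) := by exact mul_lt_mul_of_pos_left hy' hS1
    _ = δ := by field_simp
  have h4 : dotp (p k) y' ≤ dotp (p k) (x k) := by
    have := dotp_sub (p k) y' x0
    linarith
  have h5 := hmax k y' h4
  linarith
end

section
/- If there exists a locally non-satiated utility function u : ℝ^m → ℝ such that for every t ∈ {1,…,T} the action x_t maximizes u over the budget set {x ∈ ℝ^m : p_t·x ≤ p_t·x_t}, then there exists a continuous, concave, strictly monotone utility function u' : ℝ^m → ℝ (x ≤ y componentwise with x ≠ y implies u'(x) < u'(y)) such that for every t, x_t maximizes u' over the same budget set {x : p_t·x ≤ p_t·x_t}. -/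
/-- linearity of dotp in second argument -/
lemma dotp_combo {m : ℕ} (q : Fin m → ℝ) (a b : ℝ) (y z : Fin m → ℝ) :
    dotp q (a • y + b • z) = a * dotp q y + b * dotp q z := by
  unfold dotp
  rw [Finset.mul_sum, Finset.mul_sum, ← Finset.sum_add_distrib]
  refine Finset.sum_congr rfl fun i _ => ?_
  simp [Pi.add_apply, Pi.smul_apply, smul_eq_mul]
  ring

lemma dotp_lt {m : ℕ} (q y z : Fin m → ℝ) (hq : ∀ i, 0 < q i)
    (hle : ∀ i, y i ≤ z i) (hne : y ≠ z) : dotp q y < dotp q z := by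
  obtain ⟨i0, hi0⟩ : ∃ i, y i ≠ z i := by
    by_contra h; push_neg at h; exact hne (funext h)
  refine Finset.sum_lt_sum (fun i _ => ?_) ⟨i0, Finset.mem_univ _, ?_⟩
  · exact mul_le_mul_of_nonneg_left (hle i) (hq i).le
  · exact mul_lt_mul_of_pos_left (lt_of_le_of_ne (hle i0) hi0) (hq i0)

lemma dotp_sub_le {m : ℕ} (q y z : Fin m → ℝ) (hq : ∀ i, 0 ≤ q i) :
    dotp q y - dotp q z ≤ (∑ i, q i) * ‖y - z‖ := by
  unfold dotp
  rw [← Finset.sum_sub_distrib, Finset.sum_mul]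
  refine Finset.sum_le_sum fun i _ => ?_
  rw [← mul_sub]
  have h1 : y i - z i ≤ ‖y - z‖ := by
    calc y i - z i ≤ |y i - z i| := le_abs_self _
    _ = ‖(y - z) i‖ := by simp [Real.norm_eq_abs]
    _ ≤ ‖y - z‖ := norm_le_pi_norm _ i
  exact mul_le_mul_of_nonneg_left h1 (hq i)

lemma concaveOn_inf' {m : ℕ} {ι : Type*} (s : Finset ι) (hs : s.Nonempty)
    (f : ι → (Fin m → ℝ) → ℝ)
    (hf : ∀ i ∈ s, ConcaveOn ℝ Set.univ (f i)) :
    ConcaveOn ℝ Set.univ (fun y => s.inf' hs fun i => f i y) := by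
  induction hs using Finset.Nonempty.cons_induction with
  | singleton a => simpa using hf a (by simp)
  | cons a s ha hs ih =>
      have h1 : ConcaveOn ℝ Set.univ (f a) := hf a (by simp)
      have h2 := ih (fun i hi => hf i (by simp [hi]))
      have := h1.inf h2
      refine this.congr fun y _ => ?_
      exact (Finset.inf'_cons _ (fun i => f i y)).symm

/-- If a dataset is rationalized by some locally non-satiated utility, then it
is rationalized by a continuous, concave, strictly monotone utility. -/
theorem rationalizable_implies_nice_rationalization {m T : ℕ}
    (p x : Fin T → Fin m → ℝ)
    (hp : ∀ t i, 0 < p t i)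
    (u : (Fin m → ℝ) → ℝ)
    (hns : ∀ (y : Fin m → ℝ) (ε : ℝ), 0 < ε → ∃ y' : Fin m → ℝ, ‖y' - y‖ < ε ∧ u y < u y')
    (hmax : ∀ t : Fin T, ∀ y : Fin m → ℝ,
      dotp (p t) y ≤ dotp (p t) (x t) → u y ≤ u (x t)) :
    ∃ u' : (Fin m → ℝ) → ℝ,
      Continuous u' ∧
      ConcaveOn ℝ Set.univ u' ∧
      (∀ y z : Fin m → ℝ, (∀ i, y i ≤ z i) → y ≠ z → u' y < u' z) ∧
      (∀ t : Fin T, ∀ y : Fin m → ℝ,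
        dotp (p t) y ≤ dotp (p t) (x t) → u' y ≤ u' (x t)) := by
  classical
  rcases Nat.eq_zero_or_pos T with hT | hT
  · -- trivial case T = 0
    refine ⟨fun y => ∑ i, y i, ?_, ?_, ?_, ?_⟩
    · exact continuous_finset_sum _ fun i _ => continuous_apply i
    · refine ⟨convex_univ, fun y _ z _ a b ha hb hab => le_of_eq ?_⟩
      simp only [smul_eq_mul, Pi.add_apply, Pi.smul_apply]
      rw [Finset.mul_sum, Finset.mul_sum, ← Finset.sum_add_distrib]
    · intro y z hle hne
      obtain ⟨i0, hi0⟩ : ∃ i, y i ≠ z i := by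
        by_contra h; push_neg at h; exact hne (funext h)
      exact Finset.sum_lt_sum (fun i _ => hle i)
        ⟨i0, Finset.mem_univ _, lt_of_le_of_ne (hle i0) hi0⟩
    · intro t; exact absurd t.2 (by omega)
  -- main case: T > 0
  have hTne : (Finset.univ : Finset (Fin T)).Nonempty := by
    refine ⟨⟨0, hT⟩, Finset.mem_univ _⟩
  -- budget levels and expenditures
  set b : Fin T → ℝ := fun t => dotp (p t) (x t) with hb
  set D : Fin T → Fin T → ℝ := fun t s => dotp (p t) (x s) - b t with hD
  -- revealed preference facts
  have R1 : ∀ t s : Fin T, D t s ≤ 0 → u (x s) ≤ u (x t) := by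
    intro t s h
    exact hmax t (x s) (by simpa [hD, sub_nonpos] using h)
  have R2 : ∀ t s : Fin T, D t s < 0 → u (x s) < u (x t) := by
    intro t s h
    set P : ℝ := ∑ i, p t i with hP
    have hPpos : 0 < 1 + P := by
      have : 0 ≤ P := Finset.sum_nonneg fun i _ => (hp t i).le
      linarith
    have hε : 0 < (-(D t s)) / (1 + P) := div_pos (by linarith) hPpos
    obtain ⟨y', hy', huy'⟩ := hns (x s) _ hε
    have hbud : dotp (p t) y' ≤ b t := by
      have h1 : dotp (p t) y' - dotp (p t) (x s) ≤ P * ‖y' - x s‖ :=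
        dotp_sub_le (p t) y' (x s) (fun i => (hp t i).le)
      have h2 : P * ‖y' - x s‖ ≤ (1 + P) * ‖y' - x s‖ := by
        have : 0 ≤ ‖y' - x s‖ := norm_nonneg _
        nlinarith
      have h3 : (1 + P) * ‖y' - x s‖ < (1 + P) * ((-(D t s)) / (1 + P)) :=
        mul_lt_mul_of_pos_left hy' hPpos
      have h4 : (1 + P) * ((-(D t s)) / (1 + P)) = -(D t s) := by
        field_simp
      have hDdef : dotp (p t) (x s) = b t + D t s := by simp [hD]
      nlinarith [h1, h2, h3]
    exact lt_of_lt_of_le huy' (hmax t y' hbud)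
  -- rank function
  set rk : Fin T → ℕ := fun t => (Finset.univ.filter fun r => u (x r) < u (x t)).card
    with hrk
  have rk_lt_T : ∀ t, rk t < T := by
    intro t
    have hss : (Finset.univ.filter fun r => u (x r) < u (x t)) ⊂ Finset.univ := by
      refine Finset.ssubset_iff_of_subset (Finset.subset_univ _) |>.2 ?_
      exact ⟨t, Finset.mem_univ _, by simp⟩
    simpa using Finset.card_lt_card hss
  have rk_mono : ∀ s t : Fin T, u (x s) ≤ u (x t) → rk s ≤ rk t := by
    intro s t h
    refine Finset.card_le_card ?_
    intro r hr
    simp only [Finset.mem_filter, Finset.mem_univ, true_and] at hr ⊢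
    exact lt_of_lt_of_le hr h
  have rk_strict : ∀ s t : Fin T, u (x s) < u (x t) → rk s < rk t := by
    intro s t h
    refine Finset.card_lt_card ?_
    rw [Finset.ssubset_iff_of_subset]
    · refine ⟨s, ?_, by simp⟩
      simp only [Finset.mem_filter, Finset.mem_univ, true_and]
      exact h
    · intro r hr
      simp only [Finset.mem_filter, Finset.mem_univ, true_and] at hr ⊢
      exact lt_trans hr h
  -- the constants d and e
  set pairs : Finset (Fin T × Fin T) := Finset.univ with hpairs
  set dset : Finset ℝ :=
    insert 1 ((pairs.filter fun q => 0 < D q.1 q.2).image fun q => D q.1 q.2) with hdset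
  set eset : Finset ℝ :=
    insert 1 ((pairs.filter fun q => D q.1 q.2 < 0).image fun q => -(D q.1 q.2)) with heset
  have hdne : dset.Nonempty := ⟨1, by simp [hdset]⟩
  have hene : eset.Nonempty := ⟨1, by simp [heset]⟩
  set d : ℝ := dset.min' hdne with hd
  set e : ℝ := eset.max' hene with he
  have hdpos : 0 < d := by
    have hall : ∀ r ∈ dset, (0:ℝ) < r := by
      intro r hr
      rw [hdset] at hr
      rcases Finset.mem_insert.1 hr with h | h
      · rw [h]; norm_num
      · obtain ⟨q, hq, rfl⟩ := Finset.mem_image.1 h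
        exact (Finset.mem_filter.1 hq).2
    exact hall _ (dset.min'_mem hdne)
  have hdle : ∀ t s, 0 < D t s → d ≤ D t s := by
    intro t s h
    refine Finset.min'_le _ _ ?_
    rw [hdset]
    refine Finset.mem_insert_of_mem (Finset.mem_image.2 ⟨(t, s), ?_, rfl⟩)
    simp [hpairs, h]
  have hepos : 0 < e := by
    have h1 : (1:ℝ) ∈ eset := by simp [heset]
    have := Finset.le_max' _ _ h1
    linarith
  have hele : ∀ t s, D t s < 0 → -(D t s) ≤ e := by
    intro t s h
    refine Finset.le_max' _ _ ?_
    rw [heset]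
    refine Finset.mem_insert_of_mem (Finset.mem_image.2 ⟨(t, s), ?_, rfl⟩)
    simp [hpairs, h]
  -- the constant K
  set K : ℝ := 1 + e / d with hK
  have hK1 : 1 < K := by
    rw [hK]
    have := div_pos hepos hdpos
    linarith
  have hKpos : 0 < K := by linarith
  -- utility levels and multipliers
  set v : Fin T → ℝ := fun t => -(K ^ (T - rk t)) with hv
  set lam : Fin T → ℝ := fun t => K ^ (T - rk t) / d with hlam
  have hlampos : ∀ t, 0 < lam t := fun t => div_pos (pow_pos hKpos _) hdpos
  have hvneg : ∀ t, v t ≤ -K := by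
    intro t
    rw [hv]
    simp only [neg_le_neg_iff]
    calc K = K ^ 1 := (pow_one K).symm
    _ ≤ K ^ (T - rk t) := by
        apply pow_le_pow_right₀ (le_of_lt hK1)
        have := rk_lt_T t
        omega
  have hv_mono : ∀ s t : Fin T, u (x s) ≤ u (x t) → v s ≤ v t := by
    intro s t h
    have := rk_mono s t h
    rw [hv]
    simp only [neg_le_neg_iff]
    exact pow_le_pow_right₀ (le_of_lt hK1) (by omega)
  have hv_gap : ∀ s t : Fin T, u (x s) < u (x t) →
      K ^ (T - rk t) * (K - 1) ≤ v t - v s := by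
    intro s t h
    have h1 := rk_strict s t h
    have h2 := rk_lt_T t
    have h3 : T - rk t + 1 ≤ T - rk s := by omega
    have h4 : K ^ (T - rk t + 1) ≤ K ^ (T - rk s) :=
      pow_le_pow_right₀ (le_of_lt hK1) h3
    rw [hv]
    simp only
    rw [sub_neg_eq_add, neg_add_eq_sub]
    calc K ^ (T - rk t) * (K - 1) = K ^ (T - rk t + 1) - K ^ (T - rk t) := by ring
    _ ≤ K ^ (T - rk s) - K ^ (T - rk t) := by linarith
  -- the Afriat inequalities
  have afriat : ∀ t s : Fin T, v s ≤ v t + lam t * D t s := by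
    intro t s
    rcases le_or_gt (D t s) 0 with hDts | hDts
    · rcases eq_or_lt_of_le hDts with hDeq | hDlt
      · -- D t s = 0 : v s ≤ v t
        have h1 : v s ≤ v t := hv_mono s t (R1 t s hDts)
        rw [hDeq, mul_zero, add_zero]
        exact h1
      · -- D t s < 0 : strict
        have h1 := hv_gap s t (R2 t s hDlt)
        have h2 := hele t s hDlt
        have h3 : lam t * (-(D t s)) ≤ lam t * e :=
          mul_le_mul_of_nonneg_left h2 (hlampos t).le
        have h4 : lam t * e = K ^ (T - rk t) * (e / d) := by
          rw [hlam]; ring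
        have h5 : e / d = K - 1 := by rw [hK]; ring
        have h6 : lam t * (-(D t s)) ≤ K ^ (T - rk t) * (K - 1) := by
          rw [h5] at h4; linarith
        linarith
    · -- D t s > 0
      rcases le_or_gt (v s) (v t) with hvle | hvlt
      · have : 0 ≤ lam t * D t s := mul_nonneg (hlampos t).le hDts.le
        linarith
      · have h1 : v s - v t ≤ K ^ (T - rk t) := by
          have := hvneg s
          have hvt : v t = -(K ^ (T - rk t)) := rfl
          have hKpow : 0 < K := hKpos
          nlinarith [pow_pos hKpos (T - rk t), hK1]
        have h2 : K ^ (T - rk t) ≤ lam t * D t s := by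
          have h3 := hdle t s hDts
          have h4 : lam t * d ≤ lam t * D t s :=
            mul_le_mul_of_nonneg_left h3 (hlampos t).le
          have h5 : lam t * d = K ^ (T - rk t) := by
            rw [hlam]; field_simp
          linarith
        linarith
  -- the utility function
  set g : Fin T → (Fin m → ℝ) → ℝ :=
    fun t y => v t + lam t * (dotp (p t) y - b t) with hg
  refine ⟨fun y => Finset.univ.inf' hTne fun t => g t y, ?_, ?_, ?_, ?_⟩
  · -- continuity
    apply Continuous.finset_inf'_apply
    intro t _
    have : Continuous fun y => dotp (p t) y := by
      unfold dotp
      exact continuous_finset_sum _ fun i _ =>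
        (continuous_const.mul (continuous_apply i))
    fun_prop
  · -- concavity
    refine concaveOn_inf' _ hTne g fun t _ => ?_
    refine ⟨convex_univ, fun y _ z _ a c ha hc hac => le_of_eq ?_⟩
    simp only [hg, smul_eq_mul, dotp_combo]
    have hc' : c = 1 - a := by linarith
    subst hc'
    ring
  · -- strict monotonicity
    intro y z hle hne
    obtain ⟨t0, _, ht0⟩ := Finset.exists_mem_eq_inf' hTne (fun t => g t z)
    dsimp only
    rw [ht0]
    refine lt_of_le_of_lt (Finset.inf'_le _ (Finset.mem_univ t0)) ?_
    rw [hg]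
    simp only
    have := dotp_lt (p t0) y z (hp t0) hle hne
    have h2 := hlampos t0
    nlinarith
  · -- rationalization
    intro t y hy
    have hxt : (Finset.univ.inf' hTne fun s => g s (x t)) = v t := by
      apply le_antisymm
      · refine le_trans (Finset.inf'_le _ (Finset.mem_univ t)) ?_
        rw [hg]; simp [hb]
      · refine Finset.le_inf' _ _ fun s _ => ?_
        have := afriat s t
        rw [hg]
        simpa [hD] using this
    dsimp only
    rw [hxt]
    refine le_trans (Finset.inf'_le _ (Finset.mem_univ t)) ?_
    rw [hg]
    simp only
    have h1 : dotp (p t) y - b t ≤ 0 := by simp [hb] at hy ⊢; linarith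
    nlinarith [hlampos t]
end

section
/- Suppose the scalars v_t ∈ ℝ and λ_t^i > 0 (t = 1,…,T, i = 1,…,n) satisfy the multi-agent Afriat inequalities v_τ − v_t − Σ_{i=1}^n λ_t^i p_t·(x_τ^i − x_t^i) ≤ 0 for all t, τ ∈ {1,…,T}. Then the function V̂(x^1,…,x^n) = min_{t ∈ {1,…,T}} { v_t + Σ_{i=1}^n λ_t^i p_t·(x^i − x_t^i) } is concave on (ℝ^m)^n, satisfies V̂(x_t^1,…,x_t^n) = v_t for every t, and for every t the joint profile (x_t^1,…,x_t^n) maximizes V̂ over all (x^1,…,x^n) satisfying the budget constraints p_t·x^i ≤ p_t·x_t^i for every i ∈ {1,…,n}. -/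
/-- The constructed multi-agent potential: the lower envelope of the hyperplanes
`y ↦ v t + ∑ i, λ t i * p t ⬝ (y i - x t i)`. -/
noncomputable def multiPotential {m n T : ℕ}
    (hT : (Finset.univ : Finset (Fin T)).Nonempty)
    (p : Fin T → Fin m → ℝ) (x : Fin T → Fin n → Fin m → ℝ)
    (v : Fin T → ℝ) (lam : Fin T → Fin n → ℝ)
    (y : Fin n → Fin m → ℝ) : ℝ :=
  Finset.univ.inf' hT fun t => v t + ∑ i, lam t i * ∑ j, p t j * (y i j - x t i j)

/-- If the multi-agent Afriat inequalities hold with positive multipliers, the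
constructed potential is concave, interpolates the data, and each observed joint
profile maximizes it subject to the individual budget constraints. -/
theorem multi_afriat_potential_properties {m n T : ℕ} (hT : 0 < T)
    (p : Fin T → Fin m → ℝ) (x : Fin T → Fin n → Fin m → ℝ)
    (v : Fin T → ℝ) (lam : Fin T → Fin n → ℝ)
    (hp : ∀ t j, 0 < p t j)
    (hlam : ∀ t i, 0 < lam t i)
    (hAfriat : ∀ t τ : Fin T,
      v τ - v t - ∑ i, lam t i * ∑ j, p t j * (x τ i j - x t i j) ≤ 0) :
    ConcaveOn ℝ Set.univ
      (multiPotential (Finset.univ_nonempty_iff.mpr ⟨⟨0, hT⟩⟩) p x v lam) ∧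
    (∀ t : Fin T,
      multiPotential (Finset.univ_nonempty_iff.mpr ⟨⟨0, hT⟩⟩) p x v lam (x t) = v t) ∧
    (∀ t : Fin T, ∀ y : Fin n → Fin m → ℝ,
      (∀ i : Fin n, (∑ j, p t j * y i j) ≤ (∑ j, p t j * x t i j)) →
      multiPotential (Finset.univ_nonempty_iff.mpr ⟨⟨0, hT⟩⟩) p x v lam y ≤
        multiPotential (Finset.univ_nonempty_iff.mpr ⟨⟨0, hT⟩⟩) p x v lam (x t)) := by
  set hne : (Finset.univ : Finset (Fin T)).Nonempty :=
    Finset.univ_nonempty_iff.mpr ⟨⟨0, hT⟩⟩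
  set g : Fin T → (Fin n → Fin m → ℝ) → ℝ :=
    fun t y => v t + ∑ i, lam t i * ∑ j, p t j * (y i j - x t i j) with hg
  have hV : ∀ y, multiPotential hne p x v lam y = Finset.univ.inf' hne fun t => g t y := by
    intro y; rfl
  -- interpolation
  have hinterp : ∀ t, multiPotential hne p x v lam (x t) = v t := by
    intro τ
    rw [hV]
    apply le_antisymm
    · exact Finset.inf'_le_of_le _ (Finset.mem_univ τ) (by simp [hg])
    · apply Finset.le_inf'
      intro t _
      have := hAfriat t τ
      simp only [hg]
      linarith
  refine ⟨?_, hinterp, ?_⟩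
  · constructor
    · exact convex_univ
    · intro y _ z _ a b ha hb hab
      rw [hV, hV, hV]
      apply Finset.le_inf'
      intro t _
      have hy : Finset.univ.inf' hne (fun t => g t y) ≤ g t y :=
        Finset.inf'_le _ (Finset.mem_univ t)
      have hz : Finset.univ.inf' hne (fun t => g t z) ≤ g t z :=
        Finset.inf'_le _ (Finset.mem_univ t)
      have hb' : b = 1 - a := by linarith
      have key : ∀ i, lam t i * ∑ j, p t j * (a * y i j + b * z i j - x t i j)
          = a * (lam t i * ∑ j, p t j * (y i j - x t i j))
          + b * (lam t i * ∑ j, p t j * (z i j - x t i j)) := by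
        intro i
        have hs : (∑ j, p t j * (a * y i j + b * z i j - x t i j))
            = a * ∑ j, p t j * (y i j - x t i j) + b * ∑ j, p t j * (z i j - x t i j) := by
          rw [Finset.mul_sum, Finset.mul_sum, ← Finset.sum_add_distrib]
          exact Finset.sum_congr rfl fun j _ => by subst hb'; ring
        rw [hs]; ring
      have hgaff : g t (a • y + b • z) = a * g t y + b * g t z := by
        simp only [hg, Pi.add_apply, Pi.smul_apply, smul_eq_mul]
        rw [Finset.sum_congr rfl fun i _ => key i, Finset.sum_add_distrib,
          ← Finset.mul_sum, ← Finset.mul_sum]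
        subst hb'; ring
      rw [smul_eq_mul, smul_eq_mul, hgaff]
      have := mul_le_mul_of_nonneg_left hy ha
      have := mul_le_mul_of_nonneg_left hz hb
      linarith
  · intro t y hy
    rw [hinterp t, hV]
    apply le_trans (Finset.inf'_le _ (Finset.mem_univ t))
    simp only [hg]
    have hsum : ∑ i, lam t i * ∑ j, p t j * (y i j - x t i j) ≤ 0 := by
      apply Finset.sum_nonpos
      intro i _
      apply mul_nonpos_of_nonneg_of_nonpos (hlam t i).le
      have : ∑ j, p t j * (y i j - x t i j)
          = (∑ j, p t j * y i j) - ∑ j, p t j * x t i j := by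
        rw [← Finset.sum_sub_distrib]; exact Finset.sum_congr rfl fun j _ => by ring
      rw [this]
      linarith [hy i]
    linarith
end

section
/- Suppose the scalars v_t ∈ ℝ and λ_t^i > 0 (t = 1,…,T, i = 1,…,n) satisfy the multi-agent Afriat inequalities v_τ − v_t − Σ_{i=1}^n λ_t^i p_t·(x_τ^i − x_t^i) ≤ 0 for all t, τ ∈ {1,…,T}, and let V̂(x^1,…,x^n) = min_{t} { v_t + Σ_{i=1}^n λ_t^i p_t·(x^i − x_t^i) }. Then the data is consistent with Nash equilibrium play with respect to the potential V̂: for every t and every agent i, the action x_t^i maximizes the function x ↦ V̂(x, x_t^{−i}) over the budget set {x ∈ ℝ^m : p_t·x ≤ p_t·x_t^i}, where x_t^{−i} denotes the actions of the other n−1 agents held fixed at their observed values. -/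
/-- If the multi-agent Afriat inequalities hold with positive multipliers, the
data is consistent with Nash play w.r.t. the constructed potential: for each
observation `t` and each agent `i`, the observed action `x t i` maximizes
`z ↦ V̂ (update (x t) i z)` over the budget set `{z : p t ⬝ z ≤ p t ⬝ x t i}`. -/
theorem multi_afriat_nash_play {m n T : ℕ} (hT : 0 < T)
    (p : Fin T → Fin m → ℝ) (x : Fin T → Fin n → Fin m → ℝ)
    (v : Fin T → ℝ) (lam : Fin T → Fin n → ℝ)
    (hp : ∀ t j, 0 < p t j)
    (hlam : ∀ t i, 0 < lam t i)
    (hAfriat : ∀ t τ : Fin T,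
      v τ - v t - ∑ i, lam t i * ∑ j, p t j * (x τ i j - x t i j) ≤ 0) :
    ∀ t : Fin T, ∀ i : Fin n, ∀ z : Fin m → ℝ,
      (∑ j, p t j * z j) ≤ (∑ j, p t j * x t i j) →
      multiPotential (Finset.univ_nonempty_iff.mpr ⟨⟨0, hT⟩⟩) p x v lam
          (Function.update (x t) i z) ≤
        multiPotential (Finset.univ_nonempty_iff.mpr ⟨⟨0, hT⟩⟩) p x v lam (x t) := by
  intro t i z hz
  set hne := (Finset.univ_nonempty_iff.mpr ⟨⟨0, hT⟩⟩ : (Finset.univ : Finset (Fin T)).Nonempty)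
  -- RHS equals v t
  have hRHS : multiPotential hne p x v lam (x t) = v t := by
    apply le_antisymm
    · apply Finset.inf'_le _ (Finset.mem_univ t) |>.trans
      simp
    · apply Finset.le_inf'
      intro τ _
      have := hAfriat τ t
      linarith
  rw [hRHS]
  -- LHS ≤ value at hyperplane t
  refine (Finset.inf'_le _ (Finset.mem_univ t)).trans ?_
  have hsum : ∑ i', lam t i' * ∑ j, p t j * (Function.update (x t) i z i' j - x t i' j)
      = lam t i * ∑ j, p t j * (z j - x t i j) := by
    rw [Finset.sum_eq_single i]
    · simp
    · intro b _ hb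
      simp [Function.update_of_ne hb]
    · simp
  rw [hsum]
  have h1 : ∑ j, p t j * (z j - x t i j) ≤ 0 := by
    have : ∑ j, p t j * (z j - x t i j) = (∑ j, p t j * z j) - ∑ j, p t j * x t i j := by
      rw [← Finset.sum_sub_distrib]; congr 1; ext j; ring
    linarith
  nlinarith [hlam t i]
end

section
/- Let p_t ∈ ℝ^m, x_t^i ∈ ℝ^m, and w_t^i ∈ ℝ^m (t = 1,…,T, i = 1,…,n), and set y_t^i = x_t^i + w_t^i. Suppose scalars v_t ∈ ℝ and λ_t^i > 0 satisfy v_τ − v_t − Σ_{i=1}^n λ_t^i p_t·(x_τ^i − x_t^i) ≤ 0 for all t, τ. Define M = max_{t,τ ∈ {1,…,T}} Σ_{i=1}^n |p_t·(w_t^i − w_τ^i)|. Then for all t, τ ∈ {1,…,T}: v_τ − v_t − Σ_{i=1}^n λ_t^i p_t·(y_τ^i − y_t^i) − (Σ_{i=1}^n λ_t^i)·M ≤ 0. Consequently (Φ, λ, v) = (M, λ, v) is feasible for the noisy test program, and the optimal value Φ*(y) of that program (the infimum of Φ ≥ 0 such that there exist v_t ∈ ℝ and λ_t^i > 0 with v_τ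 − v_t − Σ_i λ_t^i p_t·(y_τ^i − y_t^i) − Σ_i λ_t^i Φ ≤ 0 for all t, τ) satisfies Φ*(y) ≤ M. -/
/-- The noise bound `M = max_{t,τ} ∑ i, |p t ⬝ (w t i - w τ i)|`. -/
noncomputable def noiseBound {m n T : ℕ}
    (hne : (Finset.univ : Finset (Fin T × Fin T)).Nonempty)
    (p : Fin T → Fin m → ℝ) (w : Fin T → Fin n → Fin m → ℝ) : ℝ :=
  Finset.univ.sup' hne fun tt =>
    ∑ i, |∑ j, p tt.1 j * (w tt.1 i j - w tt.2 i j)|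

/-- If the clean data `x` satisfies the multi-agent Afriat inequalities, then
the noisy data `y = x + w` satisfies the relaxed inequalities with slack
`(∑ i, λ t i) * M`, and hence the optimal value `Φ*` of the noisy test program
is at most `M`. -/
theorem noisy_test_statistic_bounded {m n T : ℕ} (hT : 0 < T)
    (p : Fin T → Fin m → ℝ) (x w y : Fin T → Fin n → Fin m → ℝ)
    (hy : ∀ t i j, y t i j = x t i j + w t i j)
    (v : Fin T → ℝ) (lam : Fin T → Fin n → ℝ)
    (hlam : ∀ t i, 0 < lam t i)
    (hAfriat : ∀ t τ : Fin T,
      v τ - v t - ∑ i, lam t i * ∑ j, p t j * (x τ i j - x t i j) ≤ 0) :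
    (∀ t τ : Fin T,
      v τ - v t - (∑ i, lam t i * ∑ j, p t j * (y τ i j - y t i j))
        - (∑ i, lam t i) *
            noiseBound (Finset.univ_nonempty_iff.mpr ⟨(⟨0, hT⟩, ⟨0, hT⟩)⟩) p w ≤ 0) ∧
    sInf {Φ : ℝ | 0 ≤ Φ ∧ ∃ (v' : Fin T → ℝ) (lam' : Fin T → Fin n → ℝ),
        (∀ t i, 0 < lam' t i) ∧
        ∀ t τ : Fin T,
          v' τ - v' t - (∑ i, lam' t i * ∑ j, p t j * (y τ i j - y t i j))
            - (∑ i, lam' t i) * Φ ≤ 0}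
      ≤ noiseBound (Finset.univ_nonempty_iff.mpr ⟨(⟨0, hT⟩, ⟨0, hT⟩)⟩) p w := by
  set M := noiseBound (Finset.univ_nonempty_iff.mpr ⟨(⟨0, hT⟩, ⟨0, hT⟩)⟩) p w with hMdef
  have h1 : ∀ t τ : Fin T, ∀ i, ∑ j, p t j * (w t i j - w τ i j) ≤ M := by
    intro t τ i
    calc ∑ j, p t j * (w t i j - w τ i j)
        ≤ |∑ j, p t j * (w t i j - w τ i j)| := le_abs_self _
      _ ≤ ∑ i', |∑ j, p t j * (w t i' j - w τ i' j)| :=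
          Finset.single_le_sum (f := fun i' => |∑ j, p t j * (w t i' j - w τ i' j)|)
            (fun i' _ => abs_nonneg _) (Finset.mem_univ i)
      _ ≤ M := by
          rw [hMdef, noiseBound]
          exact Finset.le_sup'
            (fun tt : Fin T × Fin T =>
              ∑ i', |∑ j, p tt.1 j * (w tt.1 i' j - w tt.2 i' j)|)
            (Finset.mem_univ (t, τ))
  have hM0 : 0 ≤ M := by
    have := h1 ⟨0, hT⟩ ⟨0, hT⟩
    rcases Nat.eq_zero_or_pos n with hn | hn
    · rw [hMdef, noiseBound]
      apply le_trans _ (Finset.le_sup'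
        (fun tt : Fin T × Fin T =>
          ∑ i', |∑ j, p tt.1 j * (w tt.1 i' j - w tt.2 i' j)|)
        (Finset.mem_univ ((⟨0, hT⟩ : Fin T), (⟨0, hT⟩ : Fin T))))
      exact Finset.sum_nonneg fun i _ => abs_nonneg _
    · have h := h1 ⟨0, hT⟩ ⟨0, hT⟩ ⟨0, hn⟩
      simpa using h
  have key : ∀ t τ : Fin T,
      v τ - v t - (∑ i, lam t i * ∑ j, p t j * (y τ i j - y t i j))
        - (∑ i, lam t i) * M ≤ 0 := by
    intro t τ
    have h2 : ∑ i, lam t i * ∑ j, p t j * (w t i j - w τ i j)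
        ≤ (∑ i, lam t i) * M := by
      rw [Finset.sum_mul]
      exact Finset.sum_le_sum fun i _ =>
        mul_le_mul_of_nonneg_left (h1 t τ i) (hlam t i).le
    have h4 : ∑ i, lam t i * ∑ j, p t j * (y τ i j - y t i j)
        = (∑ i, lam t i * ∑ j, p t j * (x τ i j - x t i j))
          - ∑ i, lam t i * ∑ j, p t j * (w t i j - w τ i j) := by
      rw [← Finset.sum_sub_distrib]
      apply Finset.sum_congr rfl
      intro i _
      rw [← mul_sub, ← Finset.sum_sub_distrib]
      congr 1
      apply Finset.sum_congr rfl
      intro j _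
      simp only [hy]
      ring
    have := hAfriat t τ
    linarith
  refine ⟨key, ?_⟩
  apply csInf_le
  · exact ⟨0, fun Φ hΦ => hΦ.1⟩
  · exact ⟨hM0, v, lam, hlam, key⟩
end
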